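/- Let h be a positive integer coprime to p, suppose F contains a primitive h-th root of unity, and let π ∈ O be a uniformizer. Then the polynomial X^h − π is irreducible over F, and the field E = F[X]/(X^h − π) is a totally ramified Galois extension of F of degree h. -/

import Mathlib

set_option synthInstance.maxHeartbeats 400000

universe u

open Polynomial
open scoped IntermediateField

section Aux

variable (O : Type*) [CommRing O] [IsDomain O] [IsDiscreteValuationRing O]
variable (F : Type*) [Field F] [Algebra O F] [IsFractionRing O F]

theorem aux_eisenstein (h : ℕ) (hpos : 0 < h) (π : O)
    (hπ : IsLocalRing.maximalIdeal O = Ideal.span {π}) :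
    (X ^ h - C π).IsEisensteinAt (Ideal.span {π}) := by
  have hπm : π ∈ IsLocalRing.maximalIdeal O := hπ ▸ Ideal.subset_span rfl
  have hπu : ¬ IsUnit π := hπm
  have hπ0 : π ≠ 0 := by
    rintro rfl
    rw [Ideal.span_singleton_eq_bot.mpr rfl] at hπ
    exact IsDiscreteValuationRing.not_a_field O hπ
  have hmonic : (X ^ h - C π).Monic := monic_X_pow_sub_C π hpos.ne'
  have hdeg : (X ^ h - C π).natDegree = h := natDegree_X_pow_sub_C
  refine ⟨?_, ?_, ?_⟩
  · rw [hmonic.leadingCoeff, ← hπ]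
    exact fun H =>
      (IsLocalRing.maximalIdeal.isMaximal O).ne_top (Ideal.eq_top_of_isUnit_mem _ H isUnit_one)
  · intro n hn
    rw [hdeg] at hn
    rw [coeff_sub, coeff_X_pow, if_neg hn.ne, coeff_C, zero_sub]
    split
    · exact neg_mem (Ideal.subset_span rfl)
    · simp
  · rw [coeff_sub, coeff_X_pow, if_neg hpos.ne, coeff_C_zero, zero_sub,
      Ideal.span_singleton_pow, neg_mem_iff, Ideal.mem_span_singleton]
    rintro ⟨c, hc⟩
    rw [pow_two, mul_assoc] at hc
    nth_rewrite 1 [← mul_one π] at hc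
    exact hπu (IsUnit.of_mul_eq_one _ (mul_left_cancel₀ hπ0 hc).symm)

theorem aux_irreducible (h : ℕ) (hpos : 0 < h) (π : O)
    (hπ : IsLocalRing.maximalIdeal O = Ideal.span {π}) :
    Irreducible (X ^ h - C (algebraMap O F π)) := by
  have hπ0 : π ≠ 0 := by
    rintro rfl
    rw [Ideal.span_singleton_eq_bot.mpr rfl] at hπ
    exact IsDiscreteValuationRing.not_a_field O hπ
  have hmonic : (X ^ h - C π).Monic := monic_X_pow_sub_C π hpos.ne'
  have hprime : Prime π := UniqueFactorizationMonoid.irreducible_iff_prime.mp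
    (IsDiscreteValuationRing.irreducible_of_span_eq_maximalIdeal π hπ0 hπ)
  have hirr : Irreducible (X ^ h - C π) :=
    (aux_eisenstein O h hpos π hπ).irreducible
      ((Ideal.span_singleton_prime hπ0).mpr hprime) hmonic.isPrimitive
      (by rw [natDegree_X_pow_sub_C]; exact hpos)
  have := (hmonic.irreducible_iff_irreducible_map_fraction_map (K := F)).mp hirr
  rwa [Polynomial.map_sub, Polynomial.map_pow, map_X, map_C] at this

end Aux


/-- Let `O` be a complete discrete valuation ring with finite residue
field of characteristic `p`, with fraction field `F`.  Let `h` be a positive integer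
coprime to `p`, suppose `F` contains a primitive `h`-th root of unity, and let `π ∈ O` be
a uniformizer (a generator of the maximal ideal).  Then `X^h - π` is irreducible over
`F`, and the field `E = F[X]/(X^h - π)` — i.e. any field `E/F` generated by a root `x`
of `X^h - π` — is a totally ramified Galois extension of `F` of degree `h`. -/
theorem xPowSubUniformizer_irreducible_and_totallyRamified_galois
    (O : Type*) [CommRing O] [IsDomain O] [IsDiscreteValuationRing O]
    [IsAdicComplete (IsLocalRing.maximalIdeal O) O]
    (F : Type*) [Field F] [Algebra O F] [IsFractionRing O F]
    (p : ℕ) [Fact p.Prime]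
    [Finite (IsLocalRing.ResidueField O)] [CharP (IsLocalRing.ResidueField O) p]
    (h : ℕ) (hpos : 0 < h) (hcop : Nat.Coprime h p)
    (hζ : ∃ ζ : F, IsPrimitiveRoot ζ h)
    (π : O) (hπ : IsLocalRing.maximalIdeal O = Ideal.span {π}) :
    Irreducible (Polynomial.X ^ h - Polynomial.C (algebraMap O F π)) ∧
    ∀ (E : Type u) [Field E] [Algebra F E] [Algebra O E] [IsScalarTower O F E]
      [IsLocalRing (integralClosure O E)] (x : E),
      Polynomial.aeval x (Polynomial.X ^ h - Polynomial.C (algebraMap O F π)) = 0 →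
      Algebra.adjoin F {x} = ⊤ →
      IsGalois F E ∧ Module.finrank F E = h ∧
        Ideal.map (algebraMap O (integralClosure O E)) (IsLocalRing.maximalIdeal O) =
          IsLocalRing.maximalIdeal (integralClosure O E) ^ h := by
  classical
  obtain ⟨ζ, hζ'⟩ := hζ
  set a : F := algebraMap O F π with ha_def
  have hπm : π ∈ IsLocalRing.maximalIdeal O := hπ ▸ Ideal.subset_span rfl
  have hπu : ¬ IsUnit π := hπm
  have hπ0 : π ≠ 0 := by
    rintro rfl
    rw [Ideal.span_singleton_eq_bot.mpr rfl] at hπ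
    exact IsDiscreteValuationRing.not_a_field O hπ
  have hprime : Prime π := UniqueFactorizationMonoid.irreducible_iff_prime.mp
    (IsDiscreteValuationRing.irreducible_of_span_eq_maximalIdeal π hπ0 hπ)
  have ha0 : a ≠ 0 := fun H => hπ0 (IsFractionRing.injective O F (by simpa [ha_def] using H))
  have hirrF : Irreducible (X ^ h - C a) := aux_irreducible O F h hpos π hπ
  have hζne : (primitiveRoots h F).Nonempty := ⟨ζ, (mem_primitiveRoots hpos).2 hζ'⟩
  refine ⟨hirrF, ?_⟩
  intro E _ _ _ _ _ x hx0 hadj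
  have hxh : x ^ h = algebraMap F E a := by
    have := hx0
    rw [map_sub, map_pow, aeval_X, aeval_C, sub_eq_zero] at this
    exact this
  have hmonicF : (X ^ h - C a).Monic := monic_X_pow_sub_C a hpos.ne'
  have hxint : IsIntegral F x := ⟨X ^ h - C a, hmonicF, by rwa [← aeval_def]⟩
  have hmin : minpoly F x = X ^ h - C a :=
    (minpoly.eq_of_irreducible_of_monic hirrF hx0 hmonicF).symm
  -- splitting field instance
  have hsf : IsSplittingField F E (X ^ h - C a) := by
    constructor
    · rw [Polynomial.map_sub, Polynomial.map_pow, map_C, map_X]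
      exact X_pow_sub_C_splits_of_isPrimitiveRoot
        (hζ'.map_of_injective (algebraMap F E).injective) hxh
    · rw [eq_top_iff, ← hadj]
      apply Algebra.adjoin_mono
      rw [Set.singleton_subset_iff, Polynomial.mem_rootSet_of_ne (X_pow_sub_C_ne_zero hpos a)]
      exact hx0
  letI := hsf
  have hgal : IsGalois F E := isGalois_of_isSplittingField_X_pow_sub_C hζne hirrF E
  letI := hgal
  have hrank : Module.finrank F E = h := finrank_of_isSplittingField_X_pow_sub_C hζne hirrF E
  haveI : FiniteDimensional F E := IsSplittingField.finiteDimensional E (X ^ h - C a)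
  refine ⟨hgal, hrank, ?_⟩
  -- integrality of x over O
  have hxintO : IsIntegral O x := by
    refine ⟨X ^ h - C π, monic_X_pow_sub_C π hpos.ne', ?_⟩
    rw [← aeval_def, map_sub, map_pow, aeval_X, aeval_C,
      IsScalarTower.algebraMap_apply O F E, ← ha_def, hxh, sub_self]
  -- power basis with generator x
  have htop : F⟮x⟯ = ⊤ := by
    apply IntermediateField.toSubalgebra_injective
    rw [IntermediateField.adjoin_simple_toSubalgebra_of_isAlgebraic hxint.isAlgebraic, hadj,
      IntermediateField.top_toSubalgebra]
  let e : F⟮x⟯ ≃ₐ[F] E := (IntermediateField.equivOfEq htop).trans IntermediateField.topEquiv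
  let B : PowerBasis F E := (IntermediateField.adjoin.powerBasis hxint).map e
  have hBgen : B.gen = x := rfl
  have hBint : IsIntegral O B.gen := hBgen ▸ hxintO
  -- minimal polynomial over O
  have hminO : minpoly O x = X ^ h - C π := by
    have h1 : minpoly F x = (minpoly O x).map (algebraMap O F) :=
      minpoly.isIntegrallyClosed_eq_field_fractions' F hxintO
    apply Polynomial.map_injective (algebraMap O F) (IsFractionRing.injective O F)
    rw [← h1, hmin, Polynomial.map_sub, Polynomial.map_pow, map_X, map_C]
  have heis' : (minpoly O B.gen).IsEisensteinAt (Submodule.span O {π}) := by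
    rw [Ideal.submodule_span_eq, hBgen, hminO]
    exact aux_eisenstein O h hpos π hπ
  -- every element integral over O lies in O[x]
  have hadjcl : ∀ z : E, IsIntegral O z → z ∈ Algebra.adjoin O ({x} : Set E) := by
    intro z hz
    have hdint : IsIntegral O (Algebra.discr F B.basis) :=
      Algebra.discr_isIntegral F fun i => by
        rw [B.basis_eq_pow i]; exact hBint.pow _
    obtain ⟨c, hc⟩ := IsIntegrallyClosed.isIntegral_iff.mp hdint
    have hc0 : c ≠ 0 := by
      rintro rfl
      exact Algebra.discr_not_zero_of_basis F B.basis (by rw [← hc, map_zero])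
    obtain ⟨m, u, hcu⟩ := IsDiscreteValuationRing.eq_unit_mul_pow_irreducible hc0
      (IsDiscreteValuationRing.irreducible_of_span_eq_maximalIdeal π hπ0 hπ)
    have h1 : Algebra.discr F B.basis • z ∈ Algebra.adjoin O ({B.gen} : Set E) :=
      Algebra.discr_mul_isIntegral_mem_adjoin (R := O) (K := F) (L := E) hBint hz
    rw [hBgen, ← hc, algebraMap_smul, hcu] at h1
    have h2 : (π ^ m) • z ∈ Algebra.adjoin O ({x} : Set E) := by
      have h3 := Subalgebra.smul_mem _ h1 ((u⁻¹ : Oˣ) : O)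
      rwa [smul_smul, ← mul_assoc, Units.inv_mul, one_mul] at h3
    have h4 := mem_adjoin_of_smul_prime_pow_smul_of_minpoly_isEisensteinAt
      (B := B) hprime hBint hz (by rwa [hBgen]) heis'
    rwa [hBgen] at h4
  -- the generator inside the integral closure
  set R := integralClosure O E with hRdef
  set x' : R := ⟨x, hxintO⟩ with hx'def
  have hx'pow : algebraMap O R π = x' ^ h := by
    apply Subtype.ext
    have hcoe : ((x' ^ h : R) : E) = x ^ h := SubmonoidClass.coe_pow x' h
    show algebraMap O E π = ((x' ^ h : R) : E)
    rw [hcoe, IsScalarTower.algebraMap_apply O F E, ← ha_def, hxh]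
  have hx'nu : ¬ IsUnit x' := by
    intro hu
    have h1 : IsUnit (algebraMap O R π) := by rw [hx'pow]; exact hu.pow h
    obtain ⟨b, hb⟩ := isUnit_iff_exists_inv.mp h1
    have hbE : algebraMap O E π * (b : E) = 1 := by
      have h2 := congrArg (Subtype.val) hb
      simpa using h2
    have hbeq : (b : E) = algebraMap F E a⁻¹ := by
      rw [map_inv₀]
      refine eq_inv_of_mul_eq_one_left ?_
      rw [← IsScalarTower.algebraMap_apply O F E, mul_comm]
      exact hbE
    have hbint : IsIntegral O ((b : E)) := b.2
    rw [hbeq] at hbint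
    have h5 : IsIntegral O (a⁻¹) :=
      (isIntegral_algebraMap_iff (algebraMap F E).injective).mp hbint
    obtain ⟨c, hc⟩ := IsIntegrallyClosed.isIntegral_iff.mp h5
    apply hπu
    have hpc : π * c = 1 := by
      apply IsFractionRing.injective O F
      rw [map_mul, map_one, hc, ← ha_def, mul_inv_cancel₀ ha0]
    exact IsUnit.of_mul_eq_one _ hpc
  have hx'mem : x' ∈ IsLocalRing.maximalIdeal R := hx'nu
  have hmaxR : IsLocalRing.maximalIdeal R = Ideal.span {x'} := by
    refine le_antisymm ?_ ?_
    · intro y hy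
      have hy1 : (y : E) ∈ Algebra.adjoin O ({x} : Set E) := hadjcl _ y.2
      rw [Algebra.adjoin_singleton_eq_range_aeval] at hy1
      obtain ⟨Q, hQ⟩ := hy1
      have hyQ : y = aeval x' Q := by
        apply Subtype.ext
        rw [show (y : E) = aeval x Q from hQ.symm]
        exact Polynomial.aeval_algHom_apply R.val x' Q
      have hdec : aeval x' Q = aeval x' Q.divX * x' + algebraMap O R (Q.coeff 0) := by
        conv_lhs => rw [← Polynomial.divX_mul_X_add Q]
        rw [map_add, map_mul, aeval_X, aeval_C]
      have hc0m : algebraMap O R (Q.coeff 0) ∈ IsLocalRing.maximalIdeal R := by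
        have heq : algebraMap O R (Q.coeff 0) = y - aeval x' Q.divX * x' := by
          rw [hyQ, hdec]; ring
        rw [heq]
        exact sub_mem hy (Ideal.mul_mem_left _ _ hx'mem)
      have hQ0 : Q.coeff 0 ∈ Ideal.span ({π} : Set O) := by
        rw [← hπ]
        intro hu
        exact hc0m (hu.map (algebraMap O R))
      obtain ⟨c, hcc⟩ := Ideal.mem_span_singleton'.mp hQ0
      rw [Ideal.mem_span_singleton]
      have hfin : y = aeval x' Q.divX * x' + algebraMap O R c * x' ^ h := by
        rw [hyQ, hdec, ← hcc, map_mul, hx'pow]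
      rw [hfin]
      exact dvd_add (Dvd.intro_left _ rfl) ((dvd_pow_self x' hpos.ne').mul_left _)
    · rw [Ideal.span_le, Set.singleton_subset_iff]
      exact hx'mem
  rw [hπ, Ideal.map_span, Set.image_singleton, hx'pow, ← Ideal.span_singleton_pow, ← hmaxR]
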